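/- For all positive integers k ≥ 2 and n₁ ≥ n₂ ≥ ... ≥ n_k ≥ 1, and for every i* ∈ [k], there exists a group fair division instance with group sizes n₁,...,n_k (with all item utilities in [0,1]) such that for every real c < (i*/k)·√(⌊n_{i*}/2⌋ − 1)/16, no allocation is PROPc. Consequently, c^PROP(n₁,...,n_k) ≥ max over i* ∈ [k] of (i*/k)·√(⌊n_{i*}/2⌋ − 1)/16 = Ω(max_{i*∈[k]} (i*/k)·√n_{i*}). -/

import Mathlib

open Finset

/-- The bundle of group `i` under the allocation `χ : [m] → [k]`. -/
def bundle {k m : ℕ} (χ : Fin m → Fin k) (i : Fin k) : Finset (Fin m) :=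
  Finset.univ.filter (fun g => χ g = i)

/-- An allocation `χ` is proportional up to `c` goods (PROP`c`): for all `i ∈ [k]` and
`j ∈ [n_i]` there exists `B ⊆ G \ A_i` with `|B| ≤ c` such that
`u^{(i,j)}(A_i) ≥ u^{(i,j)}(G)/k − u^{(i,j)}(B)`. -/
def IsProp {k m : ℕ} (ns : Fin k → ℕ) (u : ∀ i : Fin k, Fin (ns i) → Fin m → ℝ)
    (χ : Fin m → Fin k) (c : ℝ) : Prop :=
  ∀ (i : Fin k) (j : Fin (ns i)), ∃ B : Finset (Fin m),
    (∀ g ∈ B, g ∉ bundle χ i) ∧ (B.card : ℝ) ≤ c ∧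
    ∑ g ∈ bundle χ i, u i j g ≥ (∑ g, u i j g) / (k : ℝ) - ∑ g ∈ B, u i j g

namespace PLB

noncomputable def sgn {d : ℕ} (a b : Fin d → Bool) : ℝ :=
  ∏ i, if a i ∧ b i then (-1 : ℝ) else 1

lemma sgn_eq_or {d : ℕ} (a b : Fin d → Bool) : sgn a b = 1 ∨ sgn a b = -1 := by
  unfold sgn
  refine Finset.prod_induction _ (fun r => r = 1 ∨ r = -1) ?_ (Or.inl rfl) ?_
  · rintro x y (rfl|rfl) (rfl|rfl) <;> norm_num
  · intro i _; split_ifs <;> simp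

lemma sgn_mul_self {d : ℕ} (a b : Fin d → Bool) : sgn a b * sgn a b = 1 := by
  rcases sgn_eq_or a b with h|h <;> rw [h] <;> norm_num

lemma sgn_zero_left {d : ℕ} (b : Fin d → Bool) : sgn (fun _ => false) b = 1 := by
  unfold sgn; simp

lemma sgn_zero_right {d : ℕ} (a : Fin d → Bool) : sgn a (fun _ => false) = 1 := by
  unfold sgn; simp

lemma sgn_comm {d : ℕ} (a b : Fin d → Bool) : sgn a b = sgn b a := by
  unfold sgn
  exact Finset.prod_congr rfl fun i _ => by
    cases h1 : a i <;> cases h2 : b i <;> simp [h1, h2]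

lemma card_V (d : ℕ) : Fintype.card (Fin d → Bool) = 2^d := by
  simp [Fintype.card_fun]

lemma sgn_split {d : ℕ} (i0 : Fin d) (a v : Fin d → Bool) :
    sgn a v = (if a i0 ∧ v i0 then (-1:ℝ) else 1) *
      ∏ i ∈ Finset.univ.erase i0, (if a i ∧ v i then (-1:ℝ) else 1) :=
  (Finset.mul_prod_erase univ _ (mem_univ i0)).symm

lemma sgn_update {d : ℕ} (i0 : Fin d) (a v : Fin d → Bool) (x : Bool) :
    sgn (Function.update a i0 x) v = (if x ∧ v i0 then (-1:ℝ) else 1) *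
      ∏ i ∈ Finset.univ.erase i0, (if a i ∧ v i then (-1:ℝ) else 1) := by
  rw [sgn_split i0]
  congr 1
  · simp
  · exact Finset.prod_congr rfl fun i hi => by
      rw [Function.update_of_ne (Finset.mem_erase.mp hi).1]

lemma sum_sgn_left {d : ℕ} (v : Fin d → Bool) :
    ∑ a : Fin d → Bool, sgn a v = if v = (fun _ => false) then ((2^d : ℕ) : ℝ) else 0 := by
  by_cases h : v = fun _ => false
  · subst h
    rw [if_pos rfl, Finset.sum_congr rfl (fun a _ => sgn_zero_right a)]
    simp [card_V]
  · rw [if_neg h]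
    obtain ⟨i0, hi0⟩ := Function.ne_iff.mp h
    have hv : v i0 = true := by revert hi0; cases h' : v i0 <;> simp
    refine Finset.sum_involution (fun a _ => Function.update a i0 (!a i0)) ?_ ?_ ?_ ?_
    · intro a _
      rw [sgn_split i0 a v, sgn_update i0 a v (!a i0)]
      cases h' : a i0 <;> simp [hv, h']
    · intro a _ _ heq
      have := congrFun heq i0
      simp at this
    · intro a _; exact mem_univ _
    · intro a _
      simp [Function.update_idem]


lemma sgn_mul_xor {d : ℕ} (a b b' : Fin d → Bool) :
    sgn a b * sgn a b' = sgn a (fun i => xor (b i) (b' i)) := by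
  unfold sgn
  rw [← Finset.prod_mul_distrib]
  refine Finset.prod_congr rfl fun i _ => ?_
  cases h1 : a i <;> cases h2 : b i <;> cases h3 : b' i <;> simp [h1, h2, h3]

lemma sum_sgn_mul {d : ℕ} (b b' : Fin d → Bool) :
    ∑ a : Fin d → Bool, sgn a b * sgn a b' = if b = b' then ((2^d : ℕ) : ℝ) else 0 := by
  have h1 : ∀ a : Fin d → Bool, sgn a b * sgn a b' = sgn a (fun i => xor (b i) (b' i)) :=
    fun a => sgn_mul_xor a b b'
  rw [Finset.sum_congr rfl (fun a _ => h1 a), sum_sgn_left]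
  have : ((fun i => xor (b i) (b' i)) = (fun _ => false)) ↔ b = b' := by
    constructor
    · intro h; funext i
      have := congrFun h i
      revert this; cases hb : b i <;> cases hb' : b' i <;> simp
    · rintro rfl; funext i; simp
  rcases em (b = b') with h | h
  · rw [if_pos (this.mpr h), if_pos h]
  · rw [if_neg (fun hh => h (this.mp hh)), if_neg h]

lemma sum_sgn_right {d : ℕ} (a : Fin d → Bool) (ha : a ≠ (fun _ => false)) :
    ∑ b : Fin d → Bool, sgn a b = 0 := by
  have h1 : ∀ b : Fin d → Bool, sgn a b = sgn b a * sgn b (fun _ => false) := fun b => by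
    rw [sgn_zero_right, mul_one, sgn_comm]
  rw [Finset.sum_congr rfl (fun b _ => h1 b), sum_sgn_mul, if_neg ha]

lemma parseval {d : ℕ} (z : (Fin d → Bool) → ℝ) :
    ∑ a : Fin d → Bool, (∑ b, z b * sgn a b)^2 = ((2^d : ℕ) : ℝ) * ∑ b, (z b)^2 := by
  have h1 : ∀ a : Fin d → Bool, (∑ b, z b * sgn a b)^2
      = ∑ b, ∑ b', (z b * z b') * (sgn a b * sgn a b') := by
    intro a
    rw [sq, Finset.sum_mul_sum]
    exact Finset.sum_congr rfl fun b _ => Finset.sum_congr rfl fun b' _ => by ring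
  calc ∑ a : Fin d → Bool, (∑ b, z b * sgn a b)^2
      = ∑ a : Fin d → Bool, ∑ b, ∑ b', (z b * z b') * (sgn a b * sgn a b') :=
        Finset.sum_congr rfl fun a _ => h1 a
    _ = ∑ b, ∑ b', ∑ a : Fin d → Bool, (z b * z b') * (sgn a b * sgn a b') := by
        rw [Finset.sum_comm]
        exact Finset.sum_congr rfl fun b _ => Finset.sum_comm
    _ = ∑ b, ∑ b', (z b * z b') * (if b = b' then ((2^d : ℕ) : ℝ) else 0) := by
        refine Finset.sum_congr rfl fun b _ => Finset.sum_congr rfl fun b' _ => ?_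
        rw [← Finset.mul_sum, sum_sgn_mul]
    _ = ∑ b, (z b * z b) * ((2^d : ℕ) : ℝ) := by
        refine Finset.sum_congr rfl fun b _ => ?_
        simp only [mul_ite, mul_zero]
        rw [Finset.sum_ite_eq (univ) b (fun b' => z b * z b' * ((2^d : ℕ) : ℝ))]
        simp
    _ = ((2^d : ℕ) : ℝ) * ∑ b, (z b)^2 := by
        rw [← Finset.sum_mul, mul_comm]
        congr 1
        exact Finset.sum_congr rfl fun b _ => by ring

lemma sum_comp_fiber {α β : Type*} [Fintype β] [DecidableEq β]
    (s : Finset α) (gc : α → β) (f : β → ℝ) :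
    ∑ x ∈ s, f (gc x) = ∑ b : β, ((s.filter fun x => gc x = b).card : ℝ) * f b := by
  classical
  rw [← Finset.sum_fiberwise' s gc f]
  refine Finset.sum_congr rfl fun b _ => ?_
  rw [Finset.sum_const, nsmul_eq_mul]

lemma card_filter_lt (k t : ℕ) (h : t ≤ k) :
    ((univ : Finset (Fin k)).filter fun i : Fin k => (i:ℕ) < t).card = t := by
  have himg : Finset.image Fin.val ((univ : Finset (Fin k)).filter fun i : Fin k => (i:ℕ) < t)
      = Finset.range t := by
    ext x
    simp only [Finset.mem_image, Finset.mem_filter, Finset.mem_univ, true_and,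
      Finset.mem_range]
    constructor
    · rintro ⟨a, ha, rfl⟩; exact ha
    · intro hx; exact ⟨⟨x, by omega⟩, hx, rfl⟩
  calc ((univ : Finset (Fin k)).filter fun i : Fin k => (i:ℕ) < t).card
      = (Finset.image Fin.val ((univ : Finset (Fin k)).filter fun i : Fin k => (i:ℕ) < t)).card :=
        (Finset.card_image_of_injective _ Fin.val_injective).symm
    _ = (Finset.range t).card := by rw [himg]
    _ = t := Finset.card_range t


noncomputable def colfn (K d : ℕ) (eV : Fin (2^d) ≃ (Fin d → Bool))
    (g : Fin (K * 2^d)) : Fin d → Bool :=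
  eV ((finProdFinEquiv.symm g).2)

lemma colfn_sum (K d : ℕ) (eV : Fin (2^d) ≃ (Fin d → Bool)) (F : (Fin d → Bool) → ℝ) :
    ∑ g : Fin (K * 2^d), F (colfn K d eV g) = K * ∑ v : Fin d → Bool, F v := by
  rw [← Equiv.sum_comp finProdFinEquiv (fun g => F (colfn K d eV g))]
  have h1 : ∀ p : Fin K × Fin (2^d), colfn K d eV (finProdFinEquiv p) = eV p.2 := by
    intro p; unfold colfn; rw [Equiv.symm_apply_apply]
  rw [Finset.sum_congr rfl (fun p _ => by rw [h1 p])]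
  rw [Fintype.sum_prod_type]
  rw [Finset.sum_congr rfl (fun x _ => (Equiv.sum_comp eV F))]
  rw [Finset.sum_const, Finset.card_univ, Fintype.card_fin, nsmul_eq_mul]

noncomputable def uu (k d K : ℕ) (ns : Fin k → ℕ) (istar : Fin k)
    (eV : Fin (2^d) ≃ (Fin d → Bool)) (i : Fin k) (j : Fin (ns i)) (g : Fin (K * 2^d)) : ℝ :=
  if h : (i:ℕ) ≤ (istar:ℕ) ∧ (j:ℕ) < 2*2^d then
    (1 + (if (j:ℕ) % 2 = 0 then (1:ℝ) else -1) *
      sgn (eV ⟨(j:ℕ)/2, by omega⟩) (colfn K d eV g)) / 2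
  else 1

lemma icc_aux (P : Prop) [Decidable P] (x : ℝ) (hx : x = 1 ∨ x = -1) :
    (1 + (if P then (1:ℝ) else -1) * x)/2 ∈ Set.Icc (0:ℝ) 1 := by
  rcases hx with rfl|rfl <;> split_ifs <;> norm_num [Set.mem_Icc]

lemma uu_mem_Icc (k d K : ℕ) (ns : Fin k → ℕ) (istar : Fin k)
    (eV : Fin (2^d) ≃ (Fin d → Bool)) (i : Fin k) (j : Fin (ns i)) (g : Fin (K * 2^d)) :
    uu k d K ns istar eV i j g ∈ Set.Icc (0:ℝ) 1 := by
  by_cases h : (i:ℕ) ≤ (istar:ℕ) ∧ (j:ℕ) < 2*2^d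
  · rw [uu, dif_pos h]
    exact icc_aux _ _ (sgn_eq_or _ _)
  · rw [uu, dif_neg h]
    exact Set.mem_Icc.mpr ⟨zero_le_one, le_rfl⟩

lemma uu_eval (k d K : ℕ) (ns : Fin k → ℕ) (istar : Fin k)
    (eV : Fin (2^d) ≃ (Fin d → Bool)) (i : Fin k) (j : Fin (ns i))
    (hi : (i:ℕ) ≤ (istar:ℕ)) (hj : (j:ℕ) < 2*2^d) (g : Fin (K * 2^d)) :
    uu k d K ns istar eV i j g
      = (1 + (if (j:ℕ) % 2 = 0 then (1:ℝ) else -1) *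
          sgn (eV ⟨(j:ℕ)/2, by omega⟩) (colfn K d eV g)) / 2 := by
  unfold uu; rw [dif_pos ⟨hi, hj⟩]

lemma uu_agent (k d K : ℕ) (ns : Fin k → ℕ) (istar : Fin k)
    (eV : Fin (2^d) ≃ (Fin d → Bool)) (i : Fin k)
    (hi : (i:ℕ) ≤ (istar:ℕ)) (hns : 2*2^d ≤ ns i) (a : Fin d → Bool) (e : Bool) :
    ∃ j : Fin (ns i), ∀ g, uu k d K ns istar eV i j g
      = (1 + (if e then (1:ℝ) else -1) * sgn a (colfn K d eV g)) / 2 := by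
  have hlt : (eV.symm a : ℕ) < 2^d := (eV.symm a).isLt
  cases e
  · have hjv : 2*(eV.symm a : ℕ) + 1 < ns i := by omega
    refine ⟨⟨2*(eV.symm a : ℕ) + 1, hjv⟩, fun g => ?_⟩
    have hjval : ((⟨2*(eV.symm a : ℕ) + 1, hjv⟩ : Fin (ns i)) : ℕ) = 2*(eV.symm a : ℕ) + 1 := rfl
    have hjlt : ((⟨2*(eV.symm a : ℕ) + 1, hjv⟩ : Fin (ns i)) : ℕ) < 2*2^d := by
      rw [hjval]; omega
    rw [uu_eval k d K ns istar eV i _ hi hjlt g]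
    have h2 : (⟨((⟨2*(eV.symm a : ℕ) + 1, hjv⟩ : Fin (ns i)) : ℕ)/2, by omega⟩ : Fin (2^d))
        = eV.symm a := by
      apply Fin.ext
      show ((⟨2*(eV.symm a : ℕ) + 1, hjv⟩ : Fin (ns i)) : ℕ)/2 = (eV.symm a : ℕ)
      rw [hjval]; omega
    rw [h2, Equiv.apply_symm_apply, if_neg (by rw [hjval]; omega), if_neg (by simp)]
  · have hjv : 2*(eV.symm a : ℕ) < ns i := by omega
    refine ⟨⟨2*(eV.symm a : ℕ), hjv⟩, fun g => ?_⟩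
    have hjval : ((⟨2*(eV.symm a : ℕ), hjv⟩ : Fin (ns i)) : ℕ) = 2*(eV.symm a : ℕ) := rfl
    have hjlt : ((⟨2*(eV.symm a : ℕ), hjv⟩ : Fin (ns i)) : ℕ) < 2*2^d := by
      rw [hjval]; omega
    rw [uu_eval k d K ns istar eV i _ hi hjlt g]
    have h2 : (⟨((⟨2*(eV.symm a : ℕ), hjv⟩ : Fin (ns i)) : ℕ)/2, by omega⟩ : Fin (2^d))
        = eV.symm a := by
      apply Fin.ext
      show ((⟨2*(eV.symm a : ℕ), hjv⟩ : Fin (ns i)) : ℕ)/2 = (eV.symm a : ℕ)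
      rw [hjval]; omega
    rw [h2, Equiv.apply_symm_apply, if_pos (by rw [hjval]; omega), if_pos rfl]


set_option maxHeartbeats 1000000 in
lemma core (k K d t : ℕ) (c : ℝ) (hk : 2 ≤ k) (hK2 : 2*K ≤ k) (hK3 : k ≤ 3*K)
    (hd : 1 ≤ d) (ht1 : 1 ≤ t) (htk : t ≤ k) (hc0 : 0 ≤ c)
    (χ : Fin (K * 2^d) → Fin k) (col : Fin (K * 2^d) → (Fin d → Bool))
    (hcs : c < (K:ℝ)/(k:ℝ) * Real.sqrt (((2^d : ℕ):ℝ)/2))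
    (hsize : ∀ i : Fin k, (K:ℝ)*((2^d:ℕ):ℝ)/(k:ℝ) - c ≤ ((bundle χ i).card : ℝ))
    (habs : ∀ i : Fin k, (i:ℕ) < t → ∀ a : Fin d → Bool, a ≠ (fun _ => false) →
        |∑ g ∈ bundle χ i, sgn a (col g)|
          ≤ ((bundle χ i).card : ℝ) - (K:ℝ)*((2^d:ℕ):ℝ)/(k:ℝ) + 2*c) :
    (t:ℝ) * ((K:ℝ)/(k:ℝ)) * Real.sqrt (((2^d:ℕ):ℝ)/2) ≤ 2*(k:ℝ)*c := by
  classical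
  have hkR : (0:ℝ) < k := by
    have : (2:ℝ) ≤ k := by exact_mod_cast hk
    linarith
  have hKR : (1:ℝ) ≤ K := by
    have : 1 ≤ K := by omega
    exact_mod_cast this
  set Q : ℝ := ((2^d : ℕ) : ℝ) with hQdef
  have hQ2 : (2:ℝ) ≤ Q := by
    have h : (2:ℕ) ≤ 2^d := by
      calc (2:ℕ) = 2^1 := (pow_one 2).symm
      _ ≤ 2^d := Nat.pow_le_pow_right (by norm_num) hd
    rw [hQdef]
    exact_mod_cast h
  set ρ : ℝ := (K:ℝ)/(k:ℝ) with hρdef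
  have hρ0 : 0 < ρ := by positivity
  have hρhalf : ρ ≤ 1/2 := by
    rw [hρdef, div_le_iff₀ hkR]
    have : (2*K : ℝ) ≤ k := by exact_mod_cast hK2
    linarith
  have hρthird : 1/3 ≤ ρ := by
    rw [hρdef, le_div_iff₀ hkR]
    have : (k:ℝ) ≤ 3*K := by exact_mod_cast hK3
    linarith
  set s : ℝ := Real.sqrt (Q/2) with hsdef
  have hs0 : 0 < s := Real.sqrt_pos.mpr (by linarith)
  have hssq : s^2 = Q/2 := Real.sq_sqrt (by linarith)
  have hmk : ∀ i : Fin k, (K:ℝ)*Q/(k:ℝ) = Q*ρ := by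
    intro _; rw [hρdef]; ring
  have hcs' : c < ρ*s := hcs
  -- per-group inequality
  have hgrp : ∀ i : Fin k, (i:ℕ) < t →
      ρ*s - 2*c ≤ ((bundle χ i).card:ℝ) - Q*ρ := by
    intro i hit
    set w : ℝ := ((bundle χ i).card : ℝ) with hwdef
    set δ : ℝ := w - Q*ρ with hδdef
    set ν : (Fin d → Bool) → ℕ := fun v => ((bundle χ i).filter (fun g => col g = v)).card
      with hνdef
    set z : (Fin d → Bool) → ℝ := fun v => (ν v : ℝ) - ρ with hzdef
    have hw : w = ∑ v : Fin d → Bool, (ν v : ℝ) := by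
      rw [hwdef]
      have := Finset.card_eq_sum_card_fiberwise
        (f := col) (s := bundle χ i) (t := (univ : Finset (Fin d → Bool)))
        (fun x _ => mem_univ _)
      rw [this]
      push_cast
      rfl
    have hfib : ∀ a : Fin d → Bool,
        ∑ g ∈ bundle χ i, sgn a (col g) = ∑ v : Fin d → Bool, (ν v:ℝ) * sgn a v := by
      intro a
      rw [sum_comp_fiber (bundle χ i) col (fun v => sgn a v)]
    have hYa : ∀ a : Fin d → Bool, a ≠ (fun _ => false) →
        ∑ v : Fin d → Bool, z v * sgn a v = ∑ g ∈ bundle χ i, sgn a (col g) := by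
      intro a ha
      rw [hfib a]
      have : ∀ v : Fin d → Bool, z v * sgn a v = (ν v:ℝ) * sgn a v - ρ * sgn a v := by
        intro v; rw [hzdef]; ring
      rw [Finset.sum_congr rfl (fun v _ => this v), Finset.sum_sub_distrib,
        ← Finset.mul_sum, sum_sgn_right a ha, mul_zero, sub_zero]
    have hY0 : ∑ v : Fin d → Bool, z v * sgn (fun _ => false) v = δ := by
      have : ∀ v : Fin d → Bool, z v * sgn (fun _ => false) v = (ν v:ℝ) - ρ := by
        intro v; rw [sgn_zero_left, mul_one, hzdef]
      rw [Finset.sum_congr rfl (fun v _ => this v), Finset.sum_sub_distrib, ← hw,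
        Finset.sum_const, Finset.card_univ, card_V, nsmul_eq_mul, hδdef]
    have hzlb : ∀ v : Fin d → Bool, ρ^2 ≤ (z v)^2 := by
      intro v
      have hz1 : z v = (ν v : ℝ) - ρ := rfl
      rcases Nat.eq_zero_or_pos (ν v) with h0 | h1
      · rw [hz1, h0]
        push_cast
        nlinarith [hρ0]
      · have h2 : (1:ℝ) ≤ (ν v : ℝ) := by exact_mod_cast h1
        rw [hz1]
        nlinarith [hρhalf, hρ0]
    have hpars : ∑ a : Fin d → Bool, (∑ v : Fin d → Bool, z v * sgn a v)^2
        = Q * ∑ v : Fin d → Bool, (z v)^2 := parseval z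
    have habs' : ∀ a : Fin d → Bool, a ≠ (fun _ => false) →
        |∑ v : Fin d → Bool, z v * sgn a v| ≤ δ + 2*c := by
      intro a ha
      rw [hYa a ha]
      have h6 := habs i hit a ha
      rw [hmk i] at h6
      rw [hδdef]
      linarith [h6]
    have hexa : ∃ a : Fin d → Bool, a ≠ (fun _ => false) := by
      have hcard : 1 < Fintype.card (Fin d → Bool) := by
        rw [card_V]
        have : (2:ℕ) ≤ 2^d := by
          calc (2:ℕ) = 2^1 := (pow_one 2).symm
          _ ≤ 2^d := Nat.pow_le_pow_right (by norm_num) hd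
        omega
      exact Fintype.exists_ne_of_one_lt_card hcard _
    have hD0 : 0 ≤ δ + 2*c := by
      obtain ⟨a0, ha0⟩ := hexa
      exact le_trans (abs_nonneg _) (habs' a0 ha0)
    have hkey : Q^2*ρ^2 - δ^2 ≤ (Q - 1) * (δ+2*c)^2 := by
      have hzsum : Q*(Q*ρ^2) ≤ Q * ∑ v : Fin d → Bool, (z v)^2 := by
        have h1 : ∑ v : Fin d → Bool, ρ^2 ≤ ∑ v : Fin d → Bool, (z v)^2 :=
          Finset.sum_le_sum (fun v _ => hzlb v)
        have h2 : ∑ v : Fin d → Bool, ρ^2 = Q*ρ^2 := by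
          rw [Finset.sum_const, Finset.card_univ, card_V, nsmul_eq_mul, hQdef]
        rw [h2] at h1
        have hQ0 : (0:ℝ) ≤ Q := by linarith
        exact mul_le_mul_of_nonneg_left h1 hQ0
      have hsplit : ∑ a ∈ (univ.erase (fun _ => false : Fin d → Bool)),
          (∑ v : Fin d → Bool, z v * sgn a v)^2
          = Q * (∑ v : Fin d → Bool, (z v)^2) - δ^2 := by
        have h5 := Finset.sum_erase_add (univ : Finset (Fin d → Bool))
          (fun a => (∑ v : Fin d → Bool, z v * sgn a v)^2)
          (mem_univ (fun _ => false : Fin d → Bool))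
        beta_reduce at h5
        rw [hpars, hY0] at h5
        linarith [h5]
      have hub : ∑ a ∈ (univ.erase (fun _ => false : Fin d → Bool)),
          (∑ v : Fin d → Bool, z v * sgn a v)^2 ≤ (Q - 1) * (δ+2*c)^2 := by
        have hcarde : ((univ.erase (fun _ => false : Fin d → Bool)).card : ℝ) = Q - 1 := by
          rw [Finset.card_erase_of_mem (mem_univ _), Finset.card_univ, card_V, hQdef]
          have h7 : (1:ℕ) ≤ 2^d := Nat.one_le_two_pow
          push_cast [h7]
          ring
        calc ∑ a ∈ (univ.erase (fun _ => false : Fin d → Bool)),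
            (∑ v : Fin d → Bool, z v * sgn a v)^2
            ≤ ∑ a ∈ (univ.erase (fun _ => false : Fin d → Bool)), (δ+2*c)^2 := by
              refine Finset.sum_le_sum (fun a ha => ?_)
              have h3 := habs' a (Finset.mem_erase.mp ha).1
              have h4 := abs_le.mp h3
              exact sq_le_sq' (by linarith [h4.1]) h4.2
          _ = ((univ.erase (fun _ => false : Fin d → Bool)).card : ℝ) * (δ+2*c)^2 := by
              rw [Finset.sum_const, nsmul_eq_mul]
          _ = (Q - 1) * (δ+2*c)^2 := by rw [hcarde]
      nlinarith [hsplit, hub, hzsum]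
    -- conclude
    by_contra hno
    push_neg at hno
    have hδub : δ + 2*c < ρ*s := by linarith
    have hδlb : -c ≤ δ := by
      have h8 := hsize i
      rw [hmk i] at h8
      rw [hδdef]
      linarith [h8]
    have hδsq : δ^2 < ρ^2*(Q/2) := by
      have h1 : δ < ρ*s := by linarith
      have h2 : -(ρ*s) < δ := by linarith
      have h3 := sq_lt_sq' h2 h1
      calc δ^2 < (ρ*s)^2 := h3
      _ = ρ^2*s^2 := by ring
      _ = ρ^2*(Q/2) := by rw [hssq]
    have hDsq : (δ+2*c)^2 < ρ^2*(Q/2) := by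
      have h3 := sq_lt_sq' (by linarith : -(ρ*s) < δ+2*c) hδub
      calc (δ+2*c)^2 < (ρ*s)^2 := h3
      _ = ρ^2*s^2 := by ring
      _ = ρ^2*(Q/2) := by rw [hssq]
    have hmul : (Q-1)*(δ+2*c)^2 ≤ (Q-1)*(ρ^2*(Q/2)) :=
      mul_le_mul_of_nonneg_left hDsq.le (by linarith)
    have h9 : (2:ℝ)*(1/3) ≤ Q*ρ :=
      mul_le_mul hQ2 hρthird (by norm_num) (by linarith)
    have h10 : (4:ℝ)/9 ≤ Q^2*ρ^2 := by nlinarith [h9]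
    have h11 : (Q-1)*(ρ^2*(Q/2)) + ρ^2*(Q/2) = (Q^2*ρ^2)/2 := by ring
    have hA : Q^2*ρ^2 - δ^2 ≤ (Q-1)*(ρ^2*(Q/2)) := le_trans hkey hmul
    linarith [hA, hδsq, h10, h11]
  -- global part
  have hsumcard : ∑ i : Fin k, ((bundle χ i).card : ℝ) = (K:ℝ)*Q := by
    have h1 : (univ : Finset (Fin (K * 2^d))).card = ∑ i : Fin k, (bundle χ i).card :=
      Finset.card_eq_sum_card_fiberwise (f := χ) (s := univ) (t := univ)
        (fun x _ => mem_univ _)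
    have h2 : ((univ : Finset (Fin (K * 2^d))).card : ℝ) = (K:ℝ)*Q := by
      rw [Finset.card_univ, Fintype.card_fin, hQdef]
      push_cast
      ring
    rw [← h2, h1]
    push_cast
    rfl
  have hsum0 : ∑ i : Fin k, (((bundle χ i).card:ℝ) - Q*ρ) = 0 := by
    rw [Finset.sum_sub_distrib, hsumcard, Finset.sum_const, Finset.card_univ,
      Fintype.card_fin, nsmul_eq_mul, hρdef]
    field_simp
    ring
  have hlb : ∑ i : Fin k, (if (i:ℕ) < t then ρ*s - 2*c else -c)
      ≤ ∑ i : Fin k, (((bundle χ i).card:ℝ) - Q*ρ) := by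
    refine Finset.sum_le_sum (fun i _ => ?_)
    by_cases hit : (i:ℕ) < t
    · rw [if_pos hit]; exact hgrp i hit
    · rw [if_neg hit]
      have := hsize i
      have hrw : (K:ℝ)*Q/(k:ℝ) = Q*ρ := hmk i
      rw [hrw] at this
      linarith
  have hite : ∑ i : Fin k, (if (i:ℕ) < t then ρ*s - 2*c else -c)
      = (t:ℝ)*(ρ*s-2*c) + ((k:ℝ)-(t:ℝ))*(-c) := by
    rw [Finset.sum_ite]
    rw [Finset.sum_const, Finset.sum_const, nsmul_eq_mul, nsmul_eq_mul]
    have hc1 : ((univ : Finset (Fin k)).filter fun i : Fin k => (i:ℕ) < t).card = t :=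
      card_filter_lt k t htk
    have hc2 : ((univ : Finset (Fin k)).filter fun i : Fin k => ¬((i:ℕ) < t)).card = k - t := by
      have := Finset.card_filter_add_card_filter_not
        (s := (univ : Finset (Fin k))) (p := fun i : Fin k => (i:ℕ) < t)
      rw [Finset.card_univ, Fintype.card_fin, hc1] at this
      omega
    rw [hc1, hc2]
    have : ((k - t : ℕ) : ℝ) = (k:ℝ) - (t:ℝ) := by
      have : t ≤ k := htk
      push_cast [this]
      ring
    rw [this]
  have hfinal : 0 ≥ (t:ℝ)*(ρ*s-2*c) + ((k:ℝ)-(t:ℝ))*(-c) := by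
    rw [← hite]
    calc ∑ i : Fin k, (if (i:ℕ) < t then ρ*s - 2*c else -c)
        ≤ ∑ i : Fin k, (((bundle χ i).card:ℝ) - Q*ρ) := hlb
      _ = 0 := hsum0
  have htR : (t:ℝ) ≤ (k:ℝ) := by exact_mod_cast htk
  have ht0 : (1:ℝ) ≤ (t:ℝ) := by exact_mod_cast ht1
  nlinarith [hfinal, hc0, htR, ht0, mul_nonneg (sub_nonneg.mpr htR) hc0]

end PLB

set_option maxHeartbeats 1600000 in
/-- For all positive integers `k ≥ 2` and `n₁ ≥ ⋯ ≥ n_k ≥ 1` (given as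
an antitone `ns : Fin k → ℕ`), and for every `i* ∈ [k]` (`istar : Fin k`, representing
the `(istar + 1)`-st group), there exists a group fair division instance with group sizes
`n₁, …, n_k` (all item utilities in `[0,1]`) such that for every real
`c < (i*/k)·√(⌊n_{i*}/2⌋ − 1)/16`, no allocation is PROP`c`.  Consequently
`c^PROP(n₁,…,n_k) ≥ max_{i*∈[k]} (i*/k)·√(⌊n_{i*}/2⌋ − 1)/16
  = Ω(max_{i*∈[k]} (i*/k)·√n_{i*})`. -/
theorem prop_lower_bound (k : ℕ) (hk : 2 ≤ k) (ns : Fin k → ℕ)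
    (hmono : ∀ a b : Fin k, a ≤ b → ns b ≤ ns a) (hpos : ∀ i, 1 ≤ ns i)
    (istar : Fin k) :
    ∃ (m : ℕ) (u : ∀ i : Fin k, Fin (ns i) → Fin m → ℝ),
      (∀ i j g, u i j g ∈ Set.Icc (0 : ℝ) 1) ∧
      ∀ c : ℝ,
        c < (((istar : ℕ) : ℝ) + 1) / (k : ℝ)
              * (Real.sqrt (((ns istar / 2 : ℕ) : ℝ) - 1) / 16) →
        ∀ χ : Fin m → Fin k, ¬ IsProp ns u χ c := by
  classical
  by_cases htriv : ns istar / 2 ≤ 1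
  · refine ⟨0, fun _ _ _ => 0, fun i j g => Set.mem_Icc.mpr ⟨le_rfl, zero_le_one⟩, ?_⟩
    intro c hc χ hP
    have hS : Real.sqrt (((ns istar / 2 : ℕ) : ℝ) - 1) = 0 := by
      apply Real.sqrt_eq_zero_of_nonpos
      have : ((ns istar / 2 : ℕ) : ℝ) ≤ 1 := by exact_mod_cast htriv
      linarith
    rw [hS] at hc
    norm_num at hc
    obtain ⟨B, _, hB2, _⟩ := hP istar ⟨0, hpos istar⟩
    have hB0 : (0:ℝ) ≤ (B.card : ℝ) := Nat.cast_nonneg _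
    have hk0 : (0:ℝ) < (k:ℝ) := by
      have : (2:ℝ) ≤ (k:ℝ) := by exact_mod_cast hk
      linarith
    linarith
  · push_neg at htriv
    have hn2 : 2 ≤ ns istar / 2 := htriv
    set d := Nat.log 2 (ns istar / 2) with hddef
    have hd1 : 1 ≤ d := by
      have := (Nat.le_log_iff_pow_le (by norm_num) (by omega)).mpr
        (by simpa using hn2 : 2^1 ≤ ns istar / 2)
      omega
    have hqle : 2^d ≤ ns istar / 2 := Nat.pow_log_le_self 2 (by omega)
    have hqgt : ns istar / 2 < 2^(d+1) := Nat.lt_pow_succ_log_self (by norm_num) _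
    set K := k/2 with hKdef
    have hK2 : 2*K ≤ k := by omega
    have hK3 : k ≤ 3*K := by omega
    have hcV : Fintype.card (Fin d → Bool) = 2^d := PLB.card_V d
    set eV : Fin (2^d) ≃ (Fin d → Bool) := (Fintype.equivFinOfCardEq hcV).symm with heVdef
    have h2q : 2*2^d ≤ ns istar := by omega
    refine ⟨K * 2^d, PLB.uu k d K ns istar eV,
      fun i j g => PLB.uu_mem_Icc k d K ns istar eV i j g, ?_⟩
    intro c hc χ hP
    have hkR : (0:ℝ) < (k:ℝ) := by
      have : (2:ℝ) ≤ (k:ℝ) := by exact_mod_cast hk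
      linarith
    -- basic extraction
    have hX : ∀ (i : Fin k) (j : Fin (ns i)),
        (∑ g, PLB.uu k d K ns istar eV i j g) / (k:ℝ) - c
          ≤ ∑ g ∈ bundle χ i, PLB.uu k d K ns istar eV i j g := by
      intro i j
      obtain ⟨B, _, hB2, hB3⟩ := hP i j
      have hBu : ∑ g ∈ B, PLB.uu k d K ns istar eV i j g ≤ (B.card : ℝ) := by
        calc ∑ g ∈ B, PLB.uu k d K ns istar eV i j g
            ≤ ∑ _g ∈ B, (1:ℝ) :=
              Finset.sum_le_sum (fun g _ => (PLB.uu_mem_Icc k d K ns istar eV i j g).2)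
          _ = (B.card : ℝ) := by rw [Finset.sum_const, nsmul_eq_mul, mul_one]
      linarith [hB3]
    have hc0 : 0 ≤ c := by
      obtain ⟨B, _, hB2, _⟩ := hP istar ⟨0, hpos istar⟩
      exact le_trans (Nat.cast_nonneg _) hB2
    -- totals and bundle sums for the pair agents
    have hNi : ∀ i : Fin k, (i:ℕ) ≤ (istar:ℕ) → 2*2^d ≤ ns i := by
      intro i hi
      exact le_trans h2q (hmono i istar (by exact hi))
    have hsize : ∀ i : Fin k,
        (K:ℝ)*((2^d:ℕ):ℝ)/(k:ℝ) - c ≤ ((bundle χ i).card : ℝ) := by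
      intro i
      by_cases hi : (i:ℕ) ≤ (istar:ℕ)
      · obtain ⟨j, hj⟩ := PLB.uu_agent k d K ns istar eV i hi (hNi i hi)
          (fun _ => false) true
        have hone : ∀ g, PLB.uu k d K ns istar eV i j g = 1 := by
          intro g
          rw [hj g, PLB.sgn_zero_left]
          norm_num
        have h1 := hX i j
        rw [Finset.sum_congr rfl (fun g _ => hone g),
          Finset.sum_congr rfl (fun (g : Fin (K*2^d)) _ => hone g)] at h1
        rw [Finset.sum_const, Finset.sum_const, Finset.card_univ, Fintype.card_fin,
          nsmul_eq_mul, nsmul_eq_mul, mul_one, mul_one] at h1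
        have hcast : ((K * 2^d : ℕ) : ℝ) = (K:ℝ)*((2^d:ℕ):ℝ) := by push_cast; ring
        rw [hcast] at h1
        linarith [h1]
      · have hone : ∀ (j : Fin (ns i)) g, PLB.uu k d K ns istar eV i j g = 1 := by
          intro j g
          rw [PLB.uu, dif_neg (by tauto)]
        have h1 := hX i ⟨0, hpos i⟩
        rw [Finset.sum_congr rfl (fun g _ => hone ⟨0, hpos i⟩ g),
          Finset.sum_congr rfl (fun (g : Fin (K*2^d)) _ => hone ⟨0, hpos i⟩ g)] at h1
        rw [Finset.sum_const, Finset.sum_const, Finset.card_univ, Fintype.card_fin,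
          nsmul_eq_mul, nsmul_eq_mul, mul_one, mul_one] at h1
        have hcast : ((K * 2^d : ℕ) : ℝ) = (K:ℝ)*((2^d:ℕ):ℝ) := by push_cast; ring
        rw [hcast] at h1
        linarith [h1]
    have habs : ∀ i : Fin k, (i:ℕ) < (istar:ℕ)+1 → ∀ a : Fin d → Bool,
        a ≠ (fun _ => false) →
        |∑ g ∈ bundle χ i, PLB.sgn a (PLB.colfn K d eV g)|
          ≤ ((bundle χ i).card : ℝ) - (K:ℝ)*((2^d:ℕ):ℝ)/(k:ℝ) + 2*c := by
      intro i hit a ha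
      have hi : (i:ℕ) ≤ (istar:ℕ) := by omega
      obtain ⟨jp, hjp⟩ := PLB.uu_agent k d K ns istar eV i hi (hNi i hi) a true
      obtain ⟨jm, hjm⟩ := PLB.uu_agent k d K ns istar eV i hi (hNi i hi) a false
      have hYp := hX i jp
      have hYm := hX i jm
      have hbp : ∑ g ∈ bundle χ i, PLB.uu k d K ns istar eV i jp g
          = (((bundle χ i).card:ℝ) + ∑ g ∈ bundle χ i, PLB.sgn a (PLB.colfn K d eV g))/2 := by
        rw [Finset.sum_congr rfl (fun g _ => hjp g), ← Finset.sum_div,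
          Finset.sum_add_distrib, Finset.sum_const, nsmul_eq_mul, mul_one]
        simp
      have hbm : ∑ g ∈ bundle χ i, PLB.uu k d K ns istar eV i jm g
          = (((bundle χ i).card:ℝ) - ∑ g ∈ bundle χ i, PLB.sgn a (PLB.colfn K d eV g))/2 := by
        rw [Finset.sum_congr rfl (fun g _ => hjm g), ← Finset.sum_div,
          Finset.sum_add_distrib, Finset.sum_const, nsmul_eq_mul, mul_one]
        simp [sub_eq_add_neg]
      have htot : ∀ e' : ℝ, ∑ g : Fin (K*2^d),
          (1 + e' * PLB.sgn a (PLB.colfn K d eV g)) / 2 = (K:ℝ)*((2^d:ℕ):ℝ)/2 := by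
        intro e'
        rw [PLB.colfn_sum K d eV (fun v => (1 + e' * PLB.sgn a v)/2)]
        rw [← Finset.sum_div, Finset.sum_add_distrib, Finset.sum_const,
          Finset.card_univ, PLB.card_V, nsmul_eq_mul, mul_one, ← Finset.mul_sum,
          PLB.sum_sgn_right a ha, mul_zero, add_zero]
        ring
      have htp : ∑ g : Fin (K*2^d), PLB.uu k d K ns istar eV i jp g
          = (K:ℝ)*((2^d:ℕ):ℝ)/2 := by
        rw [Finset.sum_congr rfl (fun (g : Fin (K*2^d)) _ => hjp g)]
        have h9 := htot 1
        simpa using h9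
      have htm : ∑ g : Fin (K*2^d), PLB.uu k d K ns istar eV i jm g
          = (K:ℝ)*((2^d:ℕ):ℝ)/2 := by
        rw [Finset.sum_congr rfl (fun (g : Fin (K*2^d)) _ => hjm g)]
        have h9 := htot (-1)
        simpa using h9
      rw [hbp, htp] at hYp
      rw [hbm, htm] at hYm
      rw [abs_le]
      have h5 : (K:ℝ)*((2^d:ℕ):ℝ)/2/(k:ℝ) = ((K:ℝ)*((2^d:ℕ):ℝ)/(k:ℝ))/2 := by ring
      rw [h5] at hYp hYm
      constructor
      · linarith [hYp]
      · linarith [hYm]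
    -- numeric facts
    have hQ2 : (2:ℝ) ≤ ((2^d:ℕ):ℝ) := by
      have h : (2:ℕ) ≤ 2^d := by
        calc (2:ℕ) = 2^1 := (pow_one 2).symm
        _ ≤ 2^d := Nat.pow_le_pow_right (by norm_num) hd1
      exact_mod_cast h
    set s : ℝ := Real.sqrt (((2^d:ℕ):ℝ)/2) with hsdef
    have hs0 : 0 < s := Real.sqrt_pos.mpr (by linarith)
    have h2s : Real.sqrt (((ns istar / 2 : ℕ) : ℝ) - 1) ≤ 2*s := by
      have e4 : Real.sqrt (4*(((2^d:ℕ):ℝ)/2)) = 2*s := by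
        rw [show (4:ℝ)*((((2^d:ℕ):ℝ))/2) = 2^2*((((2^d:ℕ):ℝ))/2) by norm_num,
          Real.sqrt_mul (by positivity), Real.sqrt_sq (by norm_num : (0:ℝ) ≤ 2)]
      rw [← e4]
      apply Real.sqrt_le_sqrt
      have h7 : ((ns istar / 2 : ℕ) : ℝ) ≤ 2*((2^d:ℕ):ℝ) := by
        have hle : ns istar / 2 ≤ 2 * 2^d := by omega
        exact_mod_cast hle
      linarith
    have htkR : ((istar:ℕ):ℝ) + 1 ≤ (k:ℝ) := by
      have := istar.isLt
      exact_mod_cast this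
    have hρthird : (1:ℝ)/3 ≤ (K:ℝ)/(k:ℝ) := by
      rw [le_div_iff₀ hkR]
      have : (k:ℝ) ≤ 3*(K:ℝ) := by exact_mod_cast hK3
      linarith
    have hcs : c < (K:ℝ)/(k:ℝ) * s := by
      have hb1 : (((istar:ℕ):ℝ)+1)/(k:ℝ)
          * (Real.sqrt (((ns istar / 2 : ℕ) : ℝ) - 1) / 16)
          ≤ (((istar:ℕ):ℝ)+1)/(k:ℝ) * ((2*s)/16) := by
        apply mul_le_mul_of_nonneg_left _ (by positivity)
        linarith [h2s]
      have hb2 : (((istar:ℕ):ℝ)+1)/(k:ℝ) * ((2*s)/16) ≤ 1 * ((2*s)/16) := by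
        apply mul_le_mul_of_nonneg_right _ (by positivity)
        rw [div_le_one hkR]
        exact htkR
      have hb3 : 1 * ((2*s)/16) ≤ (K:ℝ)/(k:ℝ) * s := by
        nlinarith [hs0.le, hρthird]
      calc c < _ := hc
        _ ≤ _ := hb1
        _ ≤ _ := hb2
        _ ≤ _ := hb3
    have hcore := PLB.core k K d ((istar:ℕ)+1) c hk hK2 hK3 hd1 (by omega)
      (by have := istar.isLt; omega) hc0 χ (PLB.colfn K d eV) hcs hsize habs
    -- final contradiction
    have h16 : c * ((k:ℝ) * 16) < (((istar:ℕ):ℝ)+1)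
        * Real.sqrt (((ns istar / 2 : ℕ) : ℝ) - 1) := by
      have hrw : (((istar:ℕ):ℝ)+1)/(k:ℝ)
          * (Real.sqrt (((ns istar / 2 : ℕ) : ℝ) - 1) / 16)
          = ((((istar:ℕ):ℝ)+1) * Real.sqrt (((ns istar / 2 : ℕ) : ℝ) - 1)) / ((k:ℝ)*16) := by
        ring
      rw [hrw] at hc
      exact (lt_div_iff₀ (by positivity)).mp hc
    have hts : (((istar:ℕ):ℝ)+1) * Real.sqrt (((ns istar / 2 : ℕ) : ℝ) - 1)
        ≤ 12*((k:ℝ)*c) := by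
      have ht0 : (0:ℝ) ≤ ((istar:ℕ):ℝ)+1 := by positivity
      have hstep1 : (((istar:ℕ):ℝ)+1) * Real.sqrt (((ns istar / 2 : ℕ) : ℝ) - 1)
          ≤ (((istar:ℕ):ℝ)+1) * (2*s) := mul_le_mul_of_nonneg_left h2s ht0
      have hstep2 : (((istar:ℕ):ℝ)+1) * s ≤ 3*((((istar:ℕ):ℝ)+1) * ((K:ℝ)/(k:ℝ)) * s) := by
        nlinarith [hρthird, hs0.le, ht0, mul_nonneg ht0 hs0.le]
      have hstep3 : (((istar:ℕ):ℝ)+1) * ((K:ℝ)/(k:ℝ)) * s ≤ 2*(k:ℝ)*c := by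
        rw [hsdef]
        exact_mod_cast hcore
      linarith [hstep1, hstep2, hstep3]
    have hkc : (0:ℝ) ≤ (k:ℝ)*c := mul_nonneg hkR.le hc0
    linarith [h16, hts, hkc]
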